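/- Let {z_n} be generated by the selective sampling process S(κ,Φ) where κ satisfies Σ_{n=1}^∞ ρ^{κ(n)} = ∞ for every 0 < ρ ≤ 1, and Φ is the non-modal count heuristic Φ(x,S) = |V_S(x)| − modefreq_f(V_S(x)) with V_S(x) the set of Voronoi neighbors of x with respect to S. If X is separable, the set of f-boundary points has μ-measure zero, and the union of all f-contiguous components of μ-measure zero itself has μ-measure zero, then with probability one, ζ_n(x) → f(x) for μ-almost every x ∈ X (i.e., ζ_n → f in measure). -/

import Mathlib

open MeasureTheory ProbabilityTheory Filter Metric
open scoped NNReal ENNReal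

/-- The support of a measure on a metric space: points all of whose open balls
have positive measure. -/
def measSupport {X : Type*} [MetricSpace X] [MeasurableSpace X]
    (μ : Measure X) : Set X :=
  {x | ∀ ε > 0, 0 < μ (ball x ε)}

/-- `b` is an `f`-boundary point iff every ball about `b` meets the set of points
with a different `f`-value in positive measure. -/
def IsFBoundaryPoint {X Y : Type*} [MetricSpace X] [MeasurableSpace X]
    (f : X → Y) (μ : Measure X) (b : X) : Prop :=
  ∀ ε > 0, 0 < μ (ball b ε ∩ {x | f x ≠ f b})

/-- The sample set `Z_n(ω) = {z_1(ω), …, z_n(ω)}`. -/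
def sampleSet {X Ω : Type*} (z : ℕ → Ω → X) (n : ℕ) (ω : Ω) : Set X :=
  {p | ∃ k, 1 ≤ k ∧ k ≤ n ∧ z k ω = p}

/-- The set of Voronoi neighbors of `x` with respect to `S`. -/
def voronoiNbrs {X : Type*} [MetricSpace X] (S : Set X) (x : X) : Set X :=
  {v ∈ S | ∃ c : X, dist x c < dist v c ∧ ∀ s ∈ S, dist v c ≤ dist s c}

/-- `modefreq_f(A)`: the frequency of the mode of `A` under `f`, i.e. the
maximum over `y` of the number of elements of `A` with `f`-value `y`. -/
noncomputable def modeFreq {X Y : Type*} (f : X → Y) (A : Set X) : ℕ :=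
  ⨆ y : Y, (A ∩ f ⁻¹' {y}).ncard

/-- The non-modal count heuristic with Voronoi neighbors:
`Φ(x,S) = |V_S(x)| − modefreq_f(V_S(x))`. -/
noncomputable def nmcVoronoi {X Y : Type*} [MetricSpace X] (f : X → Y)
    (x : X) (S : Set X) : ℤ :=
  ((voronoiNbrs S x).ncard : ℤ) - modeFreq f (voronoiNbrs S x)

/-- `R` is `f`-contiguous: `R` is connected, `f` is constant on `R`, `R` lies in
the support of `μ`, and `R` contains no `f`-boundary point. -/
def IsFContiguous {X Y : Type*} [MetricSpace X] [MeasurableSpace X]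
    (f : X → Y) (μ : Measure X) (R : Set X) : Prop :=
  IsPreconnected R ∧ (∀ a ∈ R, ∀ b ∈ R, f a = f b) ∧
    R ⊆ measSupport μ ∧ ∀ b ∈ R, ¬ IsFBoundaryPoint f μ b

/-- An `f`-contiguous component: a maximal `f`-contiguous set. -/
def IsFContiguousComponent {X Y : Type*} [MetricSpace X] [MeasurableSpace X]
    (f : X → Y) (μ : Measure X) (C : Set X) : Prop :=
  IsFContiguous f μ C ∧ ∀ R : Set X, IsFContiguous f μ R → C ⊆ R → R = C

theorem aux_hit
    {X : Type*} [MeasurableSpace X]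
    (μ : Measure X) [IsProbabilityMeasure μ]
    {Ω : Type*} [MeasurableSpace Ω] (P : Measure Ω) [IsProbabilityMeasure P]
    (κ : ℕ → ℕ)
    (hκ : ∀ ρ : ℝ, 0 < ρ → ρ ≤ 1 →
      Tendsto (fun N => ∑ n ∈ Finset.Icc 1 N, ρ ^ κ n) atTop atTop)
    (cand : (n : ℕ) → Fin (κ (n + 1)) → Ω → X)
    (hmeas : ∀ n i, Measurable (cand n i))
    (hlaw : ∀ n i, P.map (cand n i) = μ)
    (hindep : iIndepFun
      (m := fun _ : Σ n : ℕ, Fin (κ (n + 1)) => (inferInstance : MeasurableSpace X))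
      (fun p => cand p.1 p.2) P)
    (A : Set X) (hA : MeasurableSet A) (hApos : 0 < μ A) :
    ∀ᵐ ω ∂P, ∃ n, ∀ i, cand n i ω ∈ A := by
  classical
  set E : ℕ → Set Ω := fun n => ⋂ i, cand n i ⁻¹' A with hE
  have hEmeas : ∀ n, MeasurableSet (E n) :=
    fun n => MeasurableSet.iInter fun i => (hmeas n i) hA
  have hPpre : ∀ n i, P (cand n i ⁻¹' A) = μ A := by
    intro n i
    rw [← hlaw n i, Measure.map_apply (hmeas n i) hA]
  have key : ∀ S : Finset ℕ, P (⋂ n ∈ S, E n) = ∏ n ∈ S, μ A ^ κ (n + 1) := by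
    intro S
    have h1 : (⋂ n ∈ S, E n) =
        ⋂ p ∈ S.sigma (fun n => (Finset.univ : Finset (Fin (κ (n + 1))))),
          (fun ω => cand p.1 p.2 ω) ⁻¹' A := by
      ext ω
      simp only [hE, Finset.mem_sigma, Set.mem_iInter, Set.mem_preimage, Finset.mem_univ, true_and, and_imp, Sigma.forall]
      tauto
    rw [h1, hindep.meas_biInter (fun p _ => ⟨A, hA, rfl⟩), Finset.prod_sigma]
    exact Finset.prod_congr rfl fun n _ => by
      simp [hPpre n]
  have PE : ∀ n, P (E n) = μ A ^ κ (n + 1) := by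
    intro n
    have := key {n}
    simpa using this
  have hiIndep : iIndepSet E P := by
    rw [iIndepSet_iff_meas_biInter hEmeas]
    intro S
    rw [key S]
    exact Finset.prod_congr rfl fun n _ => (PE n).symm
  have hdiv : (∑' n, P (E n)) = ⊤ := by
    simp_rw [PE]
    set ρ : ℝ≥0 := (μ A).toNNReal with hρ
    have hμA : μ A = (ρ : ℝ≥0∞) := (ENNReal.coe_toNNReal (measure_ne_top μ A)).symm
    rw [hμA]
    simp_rw [← ENNReal.coe_pow]
    by_contra h
    have hsum : Summable (fun n => ρ ^ κ (n + 1)) :=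
      ENNReal.tsum_coe_ne_top_iff_summable.1 h
    have hsumR : Summable (fun n => (ρ : ℝ) ^ κ (n + 1)) := by
      have := NNReal.summable_coe.2 hsum
      simpa using this
    have hρpos : (0 : ℝ) < ρ := by
      have : 0 < ρ := ENNReal.toNNReal_pos hApos.ne' (measure_ne_top μ A)
      exact_mod_cast this
    have hρle : (ρ : ℝ) ≤ 1 := by
      have : μ A ≤ 1 := prob_le_one
      rw [hμA] at this
      exact_mod_cast this
    have htend := hκ (ρ : ℝ) hρpos hρle
    have heq : (fun N => ∑ n ∈ Finset.Icc 1 N, (ρ : ℝ) ^ κ n) =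
        fun N => ∑ i ∈ Finset.range N, (ρ : ℝ) ^ κ (1 + i) := by
      funext N
      rw [← Finset.Ico_add_one_right_eq_Icc, Finset.sum_Ico_eq_sum_range]
      simp
    rw [heq] at htend
    have heq2 : (fun i => (ρ : ℝ) ^ κ (1 + i)) = fun i => (ρ : ℝ) ^ κ (i + 1) := by
      funext i; rw [add_comm]
    rw [heq2] at htend
    exact not_tendsto_atTop_of_tendsto_nhds hsumR.hasSum.tendsto_sum_nat htend
  have hone : P (limsup E atTop) = 1 := measure_limsup_eq_one hEmeas hiIndep hdiv
  have hae : ∀ᵐ ω ∂P, ω ∈ limsup E atTop := by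
    rw [ae_iff]
    have hm : MeasurableSet (limsup E atTop) := MeasurableSet.measurableSet_limsup hEmeas
    have : {ω | ω ∉ limsup E atTop} = (limsup E atTop)ᶜ := rfl
    rw [this, measure_compl hm (measure_ne_top P _), hone, measure_univ, tsub_self]
  filter_upwards [hae] with ω hω
  have hfreq : ∃ᶠ n in atTop, ω ∈ E n := mem_limsup_iff_frequently_mem.1 hω
  obtain ⟨n, hn⟩ := hfreq.exists
  exact ⟨n, fun i => Set.mem_iInter.1 hn i⟩


/-- **Convergence in measure of the non-modal count heuristic (Voronoi
neighbors).** If `X` is separable, the `f`-boundary has measure zero, and the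
union of all `f`-contiguous components of measure zero itself has measure zero,
then with probability one the nearest neighbor predictions converge to `f`
μ-almost everywhere (i.e. in measure). -/
theorem nmc_voronoi_convergence_in_measure
    {X : Type*} [MetricSpace X] [TopologicalSpace.SeparableSpace X]
    [MeasurableSpace X] [BorelSpace X]
    {Y : Type*} [Countable Y]
    (μ : Measure X) [IsProbabilityMeasure μ] (f : X → Y)
    {Ω : Type*} [MeasurableSpace Ω] (P : Measure Ω) [IsProbabilityMeasure P]
    -- the candidate-count function κ : ℕ⁺ → ℕ⁺ (κ (n+1) candidates at step n+1)
    (κ : ℕ → ℕ) (hκpos : ∀ n, 1 ≤ κ n)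
    (hκ : ∀ ρ : ℝ, 0 < ρ → ρ ≤ 1 →
      Tendsto (fun N => ∑ n ∈ Finset.Icc 1 N, ρ ^ κ n) atTop atTop)
    -- at step n+1, κ(n+1) candidates are drawn, iid with law μ
    (cand : (n : ℕ) → Fin (κ (n + 1)) → Ω → X)
    (hmeas : ∀ n i, Measurable (cand n i))
    (hlaw : ∀ n i, P.map (cand n i) = μ)
    (hindep : iIndepFun
      (m := fun _ : Σ n : ℕ, Fin (κ (n + 1)) => (inferInstance : MeasurableSpace X))
      (fun p => cand p.1 p.2) P)
    -- the sample z_{n+1} is a candidate maximizing the non-modal count Φ(·, Z_n)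
    (z : ℕ → Ω → X)
    (hsel : ∀ ω n, ∃ i : Fin (κ (n + 1)), z (n + 1) ω = cand n i ω ∧
      ∀ j : Fin (κ (n + 1)),
        nmcVoronoi f (cand n j ω) (sampleSet z n ω) ≤
          nmcVoronoi f (cand n i ω) (sampleSet z n ω))
    -- ζ_n is a nearest neighbor prediction over Z_n (ties broken arbitrarily)
    (ζ : ℕ → Ω → X → Y)
    (hζ : ∀ ω x n, 1 ≤ n → ∃ i, 1 ≤ i ∧ i ≤ n ∧
      (∀ j, 1 ≤ j → j ≤ n → dist x (z i ω) ≤ dist x (z j ω)) ∧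
      ζ n ω x = f (z i ω))
    (hbdry : μ {b | IsFBoundaryPoint f μ b} = 0)
    (hnull : μ (⋃ C ∈ {C : Set X | IsFContiguousComponent f μ C ∧ μ C = 0}, C) = 0) :
    ∀ᵐ ω ∂P, ∀ᵐ x ∂μ, ∀ᶠ n in atTop, ζ n ω x = f x := by
  classical
  have hXne : Nonempty X := by
    by_contra h
    rw [not_nonempty_iff] at h
    have h1 : μ Set.univ = 1 := measure_univ
    rw [Set.univ_eq_empty_iff.2 h] at h1
    simp at h1
  set seq : ℕ → X := TopologicalSpace.denseSeq X with hseqdef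
  have hseq : DenseRange seq := TopologicalSpace.denseRange_denseSeq X
  set D : ℕ → ℚ → Y → Set X :=
    fun m r y => ball (seq m) (r : ℝ) ∩ {x | f x ≠ y} with hDdef
  set N : Set X :=
    ⋃ m, ⋃ r : ℚ, ⋃ y : Y, {x | x ∈ D m r y ∧ μ (D m r y) = 0} with hNdef
  have hN : μ N = 0 := by
    refine measure_iUnion_null fun m => measure_iUnion_null fun r =>
      measure_iUnion_null fun y => ?_
    by_cases h : μ (D m r y) = 0
    · exact measure_mono_null (fun x hx => hx.1) h
    · have he : {x | x ∈ D m r y ∧ μ (D m r y) = 0} = ∅ := by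
        ext x; simp [h]
      rw [he]; exact measure_empty
  set SB : Set X :=
    ⋃ m, ⋃ r : ℚ, {x | x ∈ ball (seq m) (r : ℝ) ∧ μ (ball (seq m) (r : ℝ)) = 0}
    with hSBdef
  have hSB : μ SB = 0 := by
    refine measure_iUnion_null fun m => measure_iUnion_null fun r => ?_
    by_cases h : μ (ball (seq m) (r : ℝ)) = 0
    · exact measure_mono_null (fun x hx => hx.1) h
    · have he : {x | x ∈ ball (seq m) (r : ℝ) ∧ μ (ball (seq m) (r : ℝ)) = 0}
          = ∅ := by
        ext x; simp [h]
      rw [he]; exact measure_empty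
  have hsuppSB : {x | x ∉ measSupport μ} ⊆ SB := by
    intro x hx
    simp only [measSupport, Set.mem_setOf_eq] at hx
    push_neg at hx
    obtain ⟨ε, hε, h0⟩ := hx
    rw [le_zero_iff] at h0
    obtain ⟨m, hm⟩ := Metric.denseRange_iff.1 hseq x (ε / 4) (by linarith)
    obtain ⟨r, hr1, hr2⟩ := exists_rat_btwn (show dist x (seq m) < ε / 2 by linarith)
    have hsub : ball (seq m) (r : ℝ) ⊆ ball x ε := by
      intro p hp
      rw [mem_ball] at hp ⊢
      have h3 := dist_triangle p (seq m) x
      have h4 : dist (seq m) x = dist x (seq m) := dist_comm _ _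
      linarith
    rw [hSBdef]
    simp only [Set.mem_iUnion, Set.mem_setOf_eq]
    exact ⟨m, r, mem_ball.2 hr1, le_antisymm (h0 ▸ measure_mono hsub) zero_le⟩
  have hxae : ∀ᵐ x ∂μ, x ∈ measSupport μ ∧ ¬ IsFBoundaryPoint f μ x := by
    rw [ae_iff]
    refine measure_mono_null ?_ (measure_union_null hSB hbdry)
    intro x hx
    simp only [Set.mem_setOf_eq, not_and, not_not] at hx
    by_cases hs : x ∈ measSupport μ
    · exact Or.inr (hx hs)
    · exact Or.inl (hsuppSB hs)
  have hhit : ∀ᵐ ω ∂P, ∀ m : ℕ, ∀ r : ℚ, 0 < μ (ball (seq m) (r : ℝ)) →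
      ∃ n, ∀ i, cand n i ω ∈ ball (seq m) (r : ℝ) := by
    rw [ae_all_iff]
    intro m
    rw [ae_all_iff]
    intro r
    by_cases h : 0 < μ (ball (seq m) (r : ℝ))
    · filter_upwards [aux_hit μ P κ hκ cand hmeas hlaw hindep _
        measurableSet_ball h] with ω hω _
      exact hω
    · filter_upwards with ω h'
      exact absurd h' h
  obtain ⟨N', hNN', hN'meas, hN'0⟩ := exists_measurable_superset_of_null hN
  have havoid : ∀ᵐ ω ∂P, ∀ n : ℕ, ∀ i : Fin (κ (n + 1)), cand n i ω ∉ N' := by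
    rw [ae_all_iff]
    intro n
    rw [ae_all_iff]
    intro i
    have hpre : P (cand n i ⁻¹' N') = 0 := by
      rw [← Measure.map_apply (hmeas n i) hN'meas, hlaw n i]
      exact hN'0
    rw [ae_iff]
    simp only [not_not]
    exact hpre
  filter_upwards [hhit, havoid] with ω hωhit hωavoid
  have hzavoid : ∀ k : ℕ, 1 ≤ k → z k ω ∉ N' := by
    intro k hk
    obtain ⟨k', rfl⟩ : ∃ k', k = k' + 1 := ⟨k - 1, by omega⟩
    obtain ⟨i, hi, -⟩ := hsel ω k'
    rw [hi]
    exact hωavoid k' i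
  filter_upwards [hxae] with x hx
  obtain ⟨hxsupp, hxbd⟩ := hx
  have hxsupp' : ∀ ε > 0, 0 < μ (ball x ε) := hxsupp
  unfold IsFBoundaryPoint at hxbd
  push_neg at hxbd
  obtain ⟨ε, hε, hε0⟩ := hxbd
  rw [le_zero_iff] at hε0
  obtain ⟨m, hm⟩ := Metric.denseRange_iff.1 hseq x (ε / 8) (by linarith)
  obtain ⟨r, hr1, hr2⟩ := exists_rat_btwn (show dist x (seq m) < ε / 4 by linarith)
  obtain ⟨r₂, hr₂1, hr₂2⟩ := exists_rat_btwn (show (r : ℝ) + ε / 4 < ε / 2 by linarith)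
  have hBpos : 0 < μ (ball (seq m) (r : ℝ)) := by
    have hsub : ball x ((r : ℝ) - dist x (seq m)) ⊆ ball (seq m) (r : ℝ) := by
      intro p hp
      rw [mem_ball] at hp ⊢
      have h3 := dist_triangle p x (seq m)
      linarith
    exact lt_of_lt_of_le (hxsupp' _ (by linarith)) (measure_mono hsub)
  have hB₂null : μ (D m r₂ (f x)) = 0 := by
    refine measure_mono_null ?_ hε0
    rintro p ⟨hp1, hp2⟩
    refine ⟨?_, hp2⟩
    rw [mem_ball] at hp1 ⊢
    have h3 := dist_triangle p (seq m) x
    have h4 : dist (seq m) x = dist x (seq m) := dist_comm _ _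
    linarith
  have hB₂N : D m r₂ (f x) ⊆ N' := by
    intro p hp
    refine hNN' ?_
    rw [hNdef]
    simp only [Set.mem_iUnion, Set.mem_setOf_eq]
    exact ⟨m, r₂, f x, hp, hB₂null⟩
  obtain ⟨n₀, hn₀⟩ := hωhit m r hBpos
  obtain ⟨i₀, hi₀, -⟩ := hsel ω n₀
  have hzk : z (n₀ + 1) ω ∈ ball (seq m) (r : ℝ) := by
    rw [hi₀]
    exact hn₀ i₀
  filter_upwards [eventually_ge_atTop (n₀ + 1)] with n hn
  obtain ⟨i, hi1, hi2, hnear, hζeq⟩ := hζ ω x n (by omega)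
  have hdk : dist x (z (n₀ + 1) ω) < ε / 8 + r := by
    have h3 := dist_triangle x (seq m) (z (n₀ + 1) ω)
    rw [mem_ball] at hzk
    have h4 : dist (seq m) (z (n₀ + 1) ω) = dist (z (n₀ + 1) ω) (seq m) :=
      dist_comm _ _
    linarith
  have hdi : dist x (z i ω) < ε / 8 + r :=
    lt_of_le_of_lt (hnear (n₀ + 1) (by omega) hn) hdk
  have hziB₂ : z i ω ∈ ball (seq m) (r₂ : ℝ) := by
    rw [mem_ball]
    have h3 := dist_triangle (z i ω) x (seq m)
    have h4 : dist (z i ω) x = dist x (z i ω) := dist_comm _ _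
    linarith
  have hzif : f (z i ω) = f x := by
    by_contra hne
    exact hzavoid i hi1 (hB₂N ⟨hziB₂, hne⟩)
  rw [hζeq, hzif]
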